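/- Let n ≥ 1 and 1 ≤ m ≤ n, let s ≥ m, and let μ_{2n,m} be the unique U(n)-invariant Borel probability measure on G_h(2n,m). If A ⊆ ℝ^{2n} is a Borel set with H^s(A) < ∞, then for Lebesgue-almost every x ∈ ℝ^{2n} one has H^{s−m}(A ∩ (V^⊥ + x)) < ∞ for μ_{2n,m}-almost every V ∈ G_h(2n,m). -/

import Mathlib

open MeasureTheory Module Metric Set
open scoped ENNReal NNReal Real

set_option synthInstance.maxHeartbeats 1000000
set_option maxHeartbeats 1000000

noncomputable section

/-- Euclidean space `ℝ^{2n}`. -/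
abbrev E (n : ℕ) : Type := EuclideanSpace ℝ (Fin (2 * n))

/-- The standard symplectic form `ω((x,y),(u,v)) = x·v − y·u` on `ℝ^{2n}`. -/
def symp (n : ℕ) (x y : E n) : ℝ :=
  ∑ i : Fin n, (x ⟨i.1, by have := i.2; omega⟩ * y ⟨i.1 + n, by have := i.2; omega⟩ -
    x ⟨i.1 + n, by have := i.2; omega⟩ * y ⟨i.1, by have := i.2; omega⟩)

/-- A linear subspace of `ℝ^{2n}` is isotropic if the symplectic form vanishes on it. -/
def IsIsotropic (n : ℕ) (V : Submodule ℝ (E n)) : Prop :=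
  ∀ v ∈ V, ∀ w ∈ V, symp n v w = 0

/-- The orthogonal projection onto a subspace, as a continuous linear endomorphism. -/
def projCLM (n : ℕ) (V : Submodule ℝ (E n)) : E n →L[ℝ] E n :=
  V.subtypeL.comp (Submodule.orthogonalProjectionOnto V)

/-- The isotropic Grassmannian `G_h(2n,m)`, realized as the set of orthogonal projection
operators onto `m`-dimensional isotropic subspaces, inside the continuous linear
endomorphisms of `ℝ^{2n}`.  For `P` in this set, the corresponding plane `V` is
`LinearMap.range P` and the orthogonal projection `P_V` is `P` itself. -/
def grass (n m : ℕ) : Set (E n →L[ℝ] E n) :=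
  {P | ∃ V : Submodule ℝ (E n), IsIsotropic n V ∧ finrank ℝ V = m ∧ P = projCLM n V}

/-- Membership in `U(n)`: a linear isometry of `ℝ^{2n}` preserving the symplectic form. -/
def IsUnitary (n : ℕ) (g : E n ≃ₗᵢ[ℝ] E n) : Prop :=
  ∀ x y, symp n (g x) (g y) = symp n x y

/-- The action of an isometry on projection operators: `P ↦ g ∘ P ∘ g⁻¹`. -/
def conjAct (n : ℕ) (g : E n ≃ₗᵢ[ℝ] E n) (P : E n →L[ℝ] E n) : E n →L[ℝ] E n :=
  (g.toLinearIsometry.toContinuousLinearMap.comp P).comp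
    g.symm.toLinearIsometry.toContinuousLinearMap

/-- `ν` is a `U(n)`-invariant Borel probability measure `μ_{2n,m}` on `G_h(2n,m)`:
a Borel measure on the space of operators giving full mass to the isotropic
Grassmannian and invariant under the conjugation action of the unitary group.
(Probability is imposed via an `IsProbabilityMeasure` instance.) -/
def IsGrassMeasure (n m : ℕ) (ν : Measure (E n →L[ℝ] E n)) : Prop :=
  ν (grass n m) = 1 ∧
    ∀ g : E n ≃ₗᵢ[ℝ] E n, IsUnitary n g → Measure.map (conjAct n g) ν = ν



lemma projCLM_apply (n : ℕ) (V : Submodule ℝ (E n)) (x : E n) :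
    projCLM n V x = (Submodule.orthogonalProjectionOnto V x : E n) := rfl

lemma range_projCLM (n : ℕ) (V : Submodule ℝ (E n)) :
    LinearMap.range (projCLM n V : E n →ₗ[ℝ] E n) = V := by
  ext z
  constructor
  · rintro ⟨w, rfl⟩
    exact (Submodule.orthogonalProjectionOnto V w).2
  · intro hz
    exact ⟨z, by simp [projCLM_apply, Submodule.starProjection_eq_self_iff.mpr hz]⟩

/-- The superset of `grass n m` used for measurability: symmetric contractive idempotents
of trace `m`. -/
def Kset (n m : ℕ) : Set (E n →L[ℝ] E n) :=
  {P | ‖P‖ ≤ 1 ∧ (∀ x, P (P x) = P x) ∧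
    (∀ x y, inner ℝ (P x) y = (inner ℝ x (P y) : ℝ)) ∧
    LinearMap.trace ℝ (E n) (P : E n →ₗ[ℝ] E n) = (m : ℝ)}

lemma isProj_of_idem {n : ℕ} (P : E n →L[ℝ] E n) (hidem : ∀ x, P (P x) = P x) :
    LinearMap.IsProj (LinearMap.range (P : E n →ₗ[ℝ] E n)) (P : E n →ₗ[ℝ] E n) := by
  constructor
  · intro x; exact ⟨x, rfl⟩
  · rintro x ⟨z, rfl⟩
    exact hidem z

lemma finrank_range_of_mem_Kset {n m : ℕ} (P : E n →L[ℝ] E n) (hP : P ∈ Kset n m) :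
    finrank ℝ (LinearMap.range (P : E n →ₗ[ℝ] E n)) = m := by
  have h := (isProj_of_idem P hP.2.1).trace
  rw [hP.2.2.2] at h
  exact_mod_cast h.symm

lemma grass_subset_Kset (n m : ℕ) : grass n m ⊆ Kset n m := by
  rintro P ⟨V, -, hVm, rfl⟩
  refine ⟨?_, ?_, ?_, ?_⟩
  · refine ContinuousLinearMap.opNorm_le_bound _ zero_le_one fun x => ?_
    rw [one_mul, projCLM_apply]
    have := Submodule.orthogonalProjectionOnto_norm_le V
    calc ‖(Submodule.orthogonalProjectionOnto V x : E n)‖ = ‖Submodule.orthogonalProjectionOnto V x‖ := rfl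
      _ ≤ ‖Submodule.orthogonalProjectionOnto V‖ * ‖x‖ := (Submodule.orthogonalProjectionOnto V).le_opNorm x
      _ ≤ 1 * ‖x‖ := by gcongr
      _ = ‖x‖ := one_mul _
  · intro x
    simp [projCLM_apply, Submodule.starProjection_eq_self_iff.mpr (show V.starProjection x ∈ V from (Submodule.orthogonalProjectionOnto V x).2)]
  · intro x y
    simpa [projCLM_apply] using Submodule.inner_starProjection_left_eq_right V x y
  · have h := (isProj_of_idem (projCLM n V) (fun x => by
      simp [projCLM_apply, Submodule.starProjection_eq_self_iff.mpr (show V.starProjection x ∈ V from (Submodule.orthogonalProjectionOnto V x).2)])).trace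
    rw [range_projCLM] at h
    rw [h, hVm]

lemma isClosed_Kset (n m : ℕ) : IsClosed (Kset n m) := by
  have happ : Continuous fun p : (E n →L[ℝ] E n) × E n => p.1 p.2 :=
    isBoundedBilinearMap_apply.continuous
  have happx : ∀ x : E n, Continuous fun P : E n →L[ℝ] E n => P x := fun x =>
    happ.comp (continuous_id.prodMk continuous_const)
  have h1 : IsClosed {P : E n →L[ℝ] E n | ‖P‖ ≤ 1} :=
    isClosed_le continuous_norm continuous_const
  have h2 : IsClosed {P : E n →L[ℝ] E n | ∀ x, P (P x) = P x} := by
    rw [setOf_forall]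
    refine isClosed_iInter fun x => isClosed_eq ?_ (happx x)
    exact happ.comp ((continuous_id).prodMk (happx x))
  have h3 : IsClosed {P : E n →L[ℝ] E n | ∀ x y, inner ℝ (P x) y = (inner ℝ x (P y) : ℝ)} := by
    rw [setOf_forall]
    refine isClosed_iInter fun x => ?_
    rw [setOf_forall]
    refine isClosed_iInter fun y => isClosed_eq ?_ ?_
    · exact (continuous_inner.comp ((happx x).prodMk continuous_const))
    · exact (continuous_inner.comp (continuous_const.prodMk (happx y)))
  have h4 : IsClosed {P : E n →L[ℝ] E n | LinearMap.trace ℝ (E n) (P : E n →ₗ[ℝ] E n) = (m : ℝ)} := by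
    have : Continuous fun P : E n →L[ℝ] E n =>
        LinearMap.trace ℝ (E n) (P : E n →ₗ[ℝ] E n) := by
      exact LinearMap.continuous_of_finiteDimensional
        ((LinearMap.trace ℝ (E n)).comp (ContinuousLinearMap.coeLM ℝ))
    exact isClosed_eq this continuous_const
  have : Kset n m = ({P : E n →L[ℝ] E n | ‖P‖ ≤ 1} ∩ {P | ∀ x, P (P x) = P x}) ∩
      ({P | ∀ x y, inner ℝ (P x) y = (inner ℝ x (P y) : ℝ)} ∩
        {P | LinearMap.trace ℝ (E n) (P : E n →ₗ[ℝ] E n) = (m : ℝ)}) := by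
    ext P; simp [Kset, and_assoc]
  rw [this]
  exact (h1.inter h2).inter (h3.inter h4)

lemma isClosed_D {n : ℕ} (K : Set (E n)) (hK : IsCompact K) :
    IsClosed {p : E n × (E n →L[ℝ] E n) | ∃ y ∈ K, p.2 (y - p.1) = 0} := by
  have : CompactSpace K := isCompact_iff_compactSpace.mp hK
  have hcont : Continuous fun q : (E n × (E n →L[ℝ] E n)) × K => q.1.2 ((q.2 : E n) - q.1.1) := by
    have happ : Continuous fun p : (E n →L[ℝ] E n) × E n => p.1 p.2 :=
      isBoundedBilinearMap_apply.continuous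
    exact happ.comp ((continuous_snd.comp continuous_fst).prodMk
      ((continuous_subtype_val.comp continuous_snd).sub
        (continuous_fst.comp continuous_fst)))
  have hC : IsClosed {q : (E n × (E n →L[ℝ] E n)) × K | q.1.2 ((q.2 : E n) - q.1.1) = 0} :=
    isClosed_eq hcont continuous_const
  have himg := isClosedMap_fst_of_compactSpace (X := E n × (E n →L[ℝ] E n)) (Y := K) _ hC
  convert himg using 1
  ext p
  constructor
  · rintro ⟨y, hy, h⟩
    exact ⟨(p, ⟨y, hy⟩), h, rfl⟩
  · rintro ⟨⟨q, y⟩, h, rfl⟩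
    exact ⟨y, y.2, h⟩

lemma mem_orth_iff {n m : ℕ} (P : E n →L[ℝ] E n) (hP : P ∈ grass n m) (z : E n) :
    z ∈ (LinearMap.range (P : E n →ₗ[ℝ] E n))ᗮ ↔ P z = 0 := by
  obtain ⟨V, -, -, rfl⟩ := hP
  rw [range_projCLM]
  rw [projCLM_apply]
  rw [← Submodule.orthogonalProjectionOnto_eq_zero_iff]
  constructor
  · intro h; simp [h]
  · intro h
    exact Subtype.ext h

lemma vol_slab_le {n m : ℕ} (P : E n →L[ℝ] E n) (hP : P ∈ Kset n m)
    (Eb : Set (E n)) (R d : ℝ) (hd : 0 ≤ d)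
    (hdiam : EMetric.diam Eb ≤ ENNReal.ofReal d) :
    volume {x : E n | ‖x‖ ≤ R ∧ ∃ y ∈ Eb, P (y - x) = 0} ≤
      ENNReal.ofReal (2*d) ^ m * ENNReal.ofReal (2*R) ^ (2*n - m) := by
  rcases Eb.eq_empty_or_nonempty with rfl | ⟨y₀, hy₀⟩
  · simp
  set V := LinearMap.range (P : E n →ₗ[ℝ] E n) with hV
  have hVm : finrank ℝ V = m := finrank_range_of_mem_Kset P hP
  have hfr : finrank ℝ (E n) = 2*n := finrank_euclideanSpace_fin
  have hm2n : m ≤ 2*n := by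
    have h1 : finrank ℝ V ≤ finrank ℝ (E n) := Submodule.finrank_le V
    rw [hVm, hfr] at h1; exact h1
  let B1 : OrthonormalBasis (Fin m) ℝ V := (stdOrthonormalBasis ℝ V).reindex (finCongr hVm)
  let v : Fin (2*n) → E n := fun i => if h : (i : ℕ) < m then (B1 ⟨i, h⟩ : E n) else 0
  have hvon : Orthonormal ℝ (Set.restrict {i : Fin (2*n) | (i:ℕ) < m} v) := by
    rw [orthonormal_iff_ite]
    rintro ⟨i, hi⟩ ⟨j, hj⟩
    have hi' : (i:ℕ) < m := hi
    have hj' : (j:ℕ) < m := hj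
    simp only [Set.restrict, Set.restrict_apply, v, dif_pos hi', dif_pos hj']
    have := orthonormal_iff_ite.mp B1.orthonormal ⟨i, hi'⟩ ⟨j, hj'⟩
    rw [Submodule.coe_inner] at this
    rw [this]
    congr 1
    simp only [eq_iff_iff]
    constructor
    · intro h; exact Subtype.ext (by simpa [Fin.ext_iff] using congrArg Fin.val h)
    · intro h; exact Fin.ext (by simpa [Fin.ext_iff, Subtype.ext_iff] using h)
  obtain ⟨b, hb⟩ := Orthonormal.exists_orthonormalBasis_extension_of_card_eq
      (𝕜 := ℝ) (E := E n) (by simp [hfr]) hvon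
  have hbV : ∀ i : Fin (2*n), (i : ℕ) < m → b i ∈ V := by
    intro i hi
    rw [hb i hi]
    simp only [v, dif_pos hi]
    exact (B1 ⟨i, hi⟩).2
  have hPfix : ∀ z ∈ V, P z = z := by
    rintro z ⟨w, rfl⟩
    exact hP.2.1 w
  have hsym := hP.2.2.1
  have hnorm : ∀ z, ‖P z‖ ≤ ‖z‖ := fun z => by
    calc ‖P z‖ ≤ ‖P‖ * ‖z‖ := P.le_opNorm z
      _ ≤ 1 * ‖z‖ := by gcongr; exact hP.1
      _ = ‖z‖ := one_mul _
  -- the coordinate map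
  let g : E n → (Fin (2*n) → ℝ) := fun x => (MeasurableEquiv.toLp 2 (Fin (2*n) → ℝ)).symm (b.repr x)
  have hg : MeasurePreserving g volume volume :=
    (EuclideanSpace.volume_preserving_symm_measurableEquiv_toLp (Fin (2*n))).comp
      b.measurePreserving_repr
  have hgi : ∀ x i, g x i = inner ℝ (b i) x := fun x i => b.repr_apply_apply x i
  let lo : Fin (2*n) → ℝ := fun i => if (i:ℕ) < m then inner ℝ (b i) (P y₀) - d else -R
  let hi : Fin (2*n) → ℝ := fun i => if (i:ℕ) < m then inner ℝ (b i) (P y₀) + d else R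
  have hsub : {x : E n | ‖x‖ ≤ R ∧ ∃ y ∈ Eb, P (y - x) = 0} ⊆
      g ⁻¹' (Set.pi univ fun i => Icc (lo i) (hi i)) := by
    rintro x ⟨hxR, y, hy, hPyx⟩
    have hPxy : P x = P y := by
      have h0 : P y - P x = 0 := by rw [← map_sub]; exact hPyx
      exact (sub_eq_zero.mp h0).symm
    intro i _
    simp only [mem_Icc, hgi, lo, hi]
    by_cases him : (i:ℕ) < m
    · rw [if_pos him, if_pos him]
      have hbiV := hbV i him
      have key : ∀ w : E n, (inner ℝ (b i) w : ℝ) = inner ℝ (b i) (P w) := fun w => by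
        conv_lhs => rw [← hPfix (b i) hbiV]
        exact hsym (b i) w
      have hdist : dist y y₀ ≤ d := by
        have h2 := (EMetric.edist_le_diam_of_mem hy hy₀).trans hdiam
        rw [edist_dist] at h2
        exact (ENNReal.ofReal_le_ofReal_iff hd).mp h2
      have habs : |(inner ℝ (b i) x : ℝ) - inner ℝ (b i) (P y₀)| ≤ d := by
        rw [key x, hPxy]
        have heq : (inner ℝ (b i) (P y) : ℝ) - inner ℝ (b i) (P y₀) = inner ℝ (b i) (P (y - y₀)) := by
          rw [map_sub, inner_sub_right]
        rw [heq]
        calc |(inner ℝ (b i) (P (y - y₀)) : ℝ)| ≤ ‖b i‖ * ‖P (y - y₀)‖ :=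
              abs_real_inner_le_norm _ _
          _ = ‖P (y - y₀)‖ := by rw [b.orthonormal.1 i, one_mul]
          _ ≤ ‖y - y₀‖ := hnorm _
          _ = dist y y₀ := (dist_eq_norm y y₀).symm
          _ ≤ d := hdist
      have h3 := abs_le.mp habs
      exact ⟨by linarith [h3.1], by linarith [h3.2]⟩
    · rw [if_neg him, if_neg him]
      have hin := abs_real_inner_le_norm (b i) x
      rw [b.orthonormal.1 i, one_mul] at hin
      have h3 := abs_le.mp (hin.trans hxR)
      exact ⟨by linarith [h3.1], by linarith [h3.2]⟩
  calc volume {x : E n | ‖x‖ ≤ R ∧ ∃ y ∈ Eb, P (y - x) = 0}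
      ≤ volume (g ⁻¹' (Set.pi univ fun i => Icc (lo i) (hi i))) := measure_mono hsub
    _ = volume (Set.pi univ fun i => Icc (lo i) (hi i)) :=
        hg.measure_preimage (MeasurableSet.univ_pi fun i => measurableSet_Icc).nullMeasurableSet
    _ = ∏ i, volume (Icc (lo i) (hi i)) := volume_pi_pi _
    _ = ∏ i : Fin (2*n), (if (i:ℕ) < m then ENNReal.ofReal (2*d) else ENNReal.ofReal (2*R)) := by
        refine Finset.prod_congr rfl fun i _ => ?_
        rw [Real.volume_Icc]
        by_cases him : (i:ℕ) < m
        · rw [if_pos him]; simp only [lo, hi, if_pos him]; congr 1; ring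
        · rw [if_neg him]; simp only [lo, hi, if_neg him]; congr 1; ring
    _ = ∏ j ∈ Finset.range (2*n), (if j < m then ENNReal.ofReal (2*d) else ENNReal.ofReal (2*R)) :=
        Fin.prod_univ_eq_prod_range
          (fun j => if j < m then ENNReal.ofReal (2*d) else ENNReal.ofReal (2*R)) (2*n)
    _ = ENNReal.ofReal (2*d) ^ m * ENNReal.ofReal (2*R) ^ (2*n - m) := by
        rw [← Finset.prod_range_mul_prod_Ico _ hm2n]
        congr 1
        · rw [Finset.prod_congr rfl (fun j hj => if_pos (Finset.mem_range.mp hj)),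
            Finset.prod_const, Finset.card_range]
        · rw [Finset.prod_congr rfl (fun j hj => if_neg (by
            have := (Finset.mem_Ico.mp hj).1; omega)), Finset.prod_const, Nat.card_Ico]


/-- If `A ⊆ ℝ^{2n}` is Borel with `H^s(A) < ∞`, `s ≥ m`, then for Lebesgue-a.e.
`x ∈ ℝ^{2n}` one has `H^{s−m}(A ∩ (V^⊥ + x)) < ∞` for `μ_{2n,m}`-a.e. plane `V`. -/
theorem stmt11 (n m : ℕ) (hn : 1 ≤ n) (hm : 1 ≤ m) (hmn : m ≤ n)
    (s : ℝ) (hs : (m : ℝ) ≤ s)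
    (ν : Measure (E n →L[ℝ] E n)) [IsProbabilityMeasure ν] (hν : IsGrassMeasure n m ν)
    (A : Set (E n)) (hA : MeasurableSet A) (hfin : μH[s] A < ∞) :
    ∀ᵐ x ∂(volume : Measure (E n)), ∀ᵐ P ∂ν, P ∈ grass n m →
      μH[s - m] (A ∩ {y : E n | y - x ∈ (LinearMap.range (P : E n →ₗ[ℝ] E n))ᗮ}) < ∞ := by
  classical
  have hspos : 0 < s := lt_of_lt_of_le (by exact_mod_cast hm) hs
  have hsm : (0:ℝ) ≤ s - m := sub_nonneg.mpr hs
  have hC0 : μH[s] A + 1 ≠ ∞ := ENNReal.add_ne_top.mpr ⟨hfin.ne, ENNReal.one_ne_top⟩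
  -- Step 1: covers
  have hcov : ∀ k : ℕ, ∃ t : ℕ → Set (E n), (A ⊆ ⋃ i, t i) ∧
      (∀ i, EMetric.diam (t i) ≤ ((k:ℝ≥0∞)+1)⁻¹) ∧
      ∑' i, ⨆ _ : (t i).Nonempty, EMetric.diam (t i) ^ s ≤ μH[s] A + 1 := by
    intro k
    have hrne : ((k:ℝ≥0∞)+1) ≠ ⊤ :=
      ENNReal.add_ne_top.mpr ⟨ENNReal.natCast_ne_top k, ENNReal.one_ne_top⟩
    have hr : (0:ℝ≥0∞) < ((k:ℝ≥0∞)+1)⁻¹ := ENNReal.inv_pos.mpr hrne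
    have hle : (⨅ (t : ℕ → Set (E n)) (_ : A ⊆ ⋃ i, t i)
        (_ : ∀ i, EMetric.diam (t i) ≤ ((k:ℝ≥0∞)+1)⁻¹),
          ∑' i, ⨆ _ : (t i).Nonempty, EMetric.diam (t i) ^ s) ≤ μH[s] A := by
      rw [Measure.hausdorffMeasure_apply]
      exact le_iSup₂ (f := fun (r : ℝ≥0∞) (_ : 0 < r) =>
        ⨅ (t : ℕ → Set (E n)) (_ : A ⊆ ⋃ i, t i) (_ : ∀ i, EMetric.diam (t i) ≤ r),
          ∑' i, ⨆ _ : (t i).Nonempty, EMetric.diam (t i) ^ s) (((k:ℝ≥0∞)+1)⁻¹) hr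
    have hlt := lt_of_le_of_lt hle (ENNReal.lt_add_right hfin.ne one_ne_zero)
    obtain ⟨t, ht⟩ := iInf_lt_iff.mp hlt
    obtain ⟨h1, ht2⟩ := iInf_lt_iff.mp ht
    obtain ⟨h2, ht3⟩ := iInf_lt_iff.mp ht2
    exact ⟨t, h1, h2, ht3.le⟩
  choose t htcov htdiam htsum using hcov
  set u : ℕ → ℕ → Set (E n) := fun k i => closure (t k i) with hu
  have hucov : ∀ k, A ⊆ ⋃ i, u k i := fun k =>
    (htcov k).trans (iUnion_mono fun i => subset_closure)
  have hudiam : ∀ k i, EMetric.diam (u k i) ≤ ((k:ℝ≥0∞)+1)⁻¹ := fun k i => by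
    rw [hu]; simp only [EMetric.diam, Metric.ediam_closure]; exact htdiam k i
  have hutop : ∀ k i, EMetric.diam (u k i) ≠ ⊤ := fun k i =>
    ((hudiam k i).trans_lt (by
      exact ENNReal.inv_lt_top.mpr (lt_of_lt_of_le zero_lt_one le_add_self))).ne
  have husum : ∀ k, ∑' i, EMetric.diam (u k i) ^ s ≤ μH[s] A + 1 := fun k => by
    refine le_trans (ENNReal.tsum_le_tsum fun i => ?_) (htsum k)
    rcases (t k i).eq_empty_or_nonempty with he | hne
    · simp only [hu, he, closure_empty, EMetric.diam, EMetric.diam_empty]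
      rw [ENNReal.zero_rpow_of_pos hspos]
      exact zero_le
    · rw [hu]; simp only [EMetric.diam, Metric.ediam_closure]
      exact le_iSup (fun _ : (t k i).Nonempty => EMetric.diam (t k i) ^ s) hne
  have hucomp : ∀ k i, IsCompact (u k i) := fun k i =>
    isCompact_of_isClosed_isBounded isClosed_closure
      (Metric.isBounded_iff_ediam_ne_top.mpr (hutop k i))
  -- Step 2: majorant
  set D : ℕ → ℕ → Set (E n × (E n →L[ℝ] E n)) :=
    fun k i => {p | ∃ y ∈ u k i, p.2 (y - p.1) = 0} with hD
  have hDclosed : ∀ k i, IsClosed (D k i) := fun k i => isClosed_D _ (hucomp k i)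
  set g : ℕ → E n × (E n →L[ℝ] E n) → ℝ≥0∞ :=
    fun k p => ∑' i, (D k i).indicator (fun _ => EMetric.diam (u k i) ^ (s - m)) p with hg
  have hgmeas : ∀ k, Measurable (g k) := fun k =>
    Measurable.ennreal_tsum fun i =>
      measurable_const.indicator (hDclosed k i).measurableSet
  set G : E n × (E n →L[ℝ] E n) → ℝ≥0∞ :=
    fun p => Filter.liminf (fun k => g k p) Filter.atTop with hGdef
  have hGmeas : Measurable G := Measurable.liminf fun k => hgmeas k
  -- Claim 1
  have claim1 : ∀ x : E n, ∀ P ∈ grass n m,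
      μH[s - m] (A ∩ {y : E n | y - x ∈ (LinearMap.range (P : E n →ₗ[ℝ] E n))ᗮ}) ≤ G (x, P) := by
    intro x P hPg
    rw [Measure.hausdorffMeasure_apply]
    refine iSup₂_le fun r hr => ?_
    obtain ⟨k, hk⟩ : ∃ k : ℕ, ((k:ℝ≥0∞)+1)⁻¹ ≤ r := by
      rcases ENNReal.exists_inv_nat_lt hr.ne' with ⟨k, hk⟩
      refine ⟨k, le_of_lt (lt_of_le_of_lt ?_ hk)⟩
      exact ENNReal.inv_le_inv.mpr (le_add_of_nonneg_right zero_le)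
    rw [hGdef]
    simp only []
    rw [Filter.liminf_eq_iSup_iInf_of_nat]
    refine le_trans ?_ (le_iSup _ k)
    refine le_iInf fun j => le_iInf fun hj => ?_
    set w : ℕ → Set (E n) := fun i => if (x, P) ∈ D j i then u j i else ∅ with hw
    have hwcov : A ∩ {y : E n | y - x ∈ (LinearMap.range (P : E n →ₗ[ℝ] E n))ᗮ} ⊆ ⋃ i, w i := by
      rintro y ⟨hyA, hyS⟩
      obtain ⟨i, hyi⟩ := mem_iUnion.mp (hucov j hyA)
      have hyP : P (y - x) = 0 := (mem_orth_iff P hPg _).mp hyS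
      have hmem : (x, P) ∈ D j i := ⟨y, hyi, hyP⟩
      exact mem_iUnion.mpr ⟨i, by rw [hw]; simp only [if_pos hmem]; exact hyi⟩
    have hwdiam : ∀ i, EMetric.diam (w i) ≤ r := fun i => by
      by_cases hmem : (x, P) ∈ D j i
      · rw [hw]; simp only [if_pos hmem]
        refine (hudiam j i).trans (le_trans ?_ hk)
        exact ENNReal.inv_le_inv.mpr (add_le_add_left (by exact_mod_cast hj) 1)
      · rw [hw]; simp only [if_neg hmem, EMetric.diam, EMetric.diam_empty]
        exact zero_le
    refine le_trans (iInf_le_of_le w (iInf_le_of_le hwcov (iInf_le _ hwdiam))) ?_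
    refine ENNReal.tsum_le_tsum fun i => ?_
    rw [hw]
    by_cases hmem : (x, P) ∈ D j i
    · simp only [if_pos hmem]
      rw [Set.indicator_of_mem hmem]
      exact iSup_le fun _ => le_rfl
    · simp only [if_neg hmem]
      rw [Set.indicator_of_notMem hmem]
      simp
  -- Claim 2
  have claim2 : ∀ (R : ℝ), 0 ≤ R → ∀ (k : ℕ), ∀ P ∈ Kset n m,
      ∫⁻ x in closedBall (0 : E n) R, g k (x, P) ∂volume ≤
        (2:ℝ≥0∞)^m * ENNReal.ofReal (2*R) ^ (2*n - m) * (μH[s] A + 1) := by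
    intro R hR k P hPK
    have hmeas_i : ∀ i, Measurable fun x : E n =>
        (D k i).indicator (fun _ => EMetric.diam (u k i) ^ (s - (m:ℝ))) (x, P) := fun i =>
      (measurable_const.indicator (hDclosed k i).measurableSet).comp
        (measurable_id.prodMk measurable_const)
    simp only [hg]
    rw [lintegral_tsum fun i => (hmeas_i i).aemeasurable]
    have hterm : ∀ i, ∫⁻ x in closedBall (0:E n) R,
        (D k i).indicator (fun _ => EMetric.diam (u k i) ^ (s - (m:ℝ))) (x, P) ∂volume ≤
        EMetric.diam (u k i) ^ s * ((2:ℝ≥0∞)^m * ENNReal.ofReal (2*R) ^ (2*n - m)) := by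
      intro i
      set S : Set (E n) := {x | (x, P) ∈ D k i} with hS
      have hSmeas : MeasurableSet S :=
        (hDclosed k i).measurableSet.preimage (measurable_id.prodMk measurable_const)
      have heq : (fun x : E n => (D k i).indicator
          (fun _ => EMetric.diam (u k i) ^ (s - (m:ℝ))) (x, P)) =
          S.indicator (fun _ => EMetric.diam (u k i) ^ (s - (m:ℝ))) := by
        ext x
        by_cases h : (x, P) ∈ D k i <;> simp [Set.indicator_apply, hS, h]
      rw [heq, lintegral_indicator hSmeas, setLIntegral_const, Measure.restrict_apply hSmeas]
      set dd : ℝ := (EMetric.diam (u k i)).toReal with hdd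
      have hvol : volume (S ∩ closedBall (0:E n) R) ≤
          ENNReal.ofReal (2*dd) ^ m * ENNReal.ofReal (2*R) ^ (2*n - m) := by
        refine le_trans (measure_mono ?_) (vol_slab_le P hPK (u k i) R dd
          ENNReal.toReal_nonneg (by rw [hdd, ENNReal.ofReal_toReal (hutop k i)]))
        rintro x ⟨hxS, hxB⟩
        exact ⟨mem_closedBall_zero_iff.mp hxB, hxS⟩
      calc EMetric.diam (u k i) ^ (s - (m:ℝ)) * volume (S ∩ closedBall (0:E n) R)
          ≤ EMetric.diam (u k i) ^ (s - (m:ℝ)) *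
            (ENNReal.ofReal (2*dd) ^ m * ENNReal.ofReal (2*R) ^ (2*n - m)) := by gcongr
        _ = EMetric.diam (u k i) ^ (s - (m:ℝ)) * EMetric.diam (u k i) ^ (m:ℝ) *
            ((2:ℝ≥0∞)^m * ENNReal.ofReal (2*R) ^ (2*n - m)) := by
            have h2d : ENNReal.ofReal (2*dd) = 2 * EMetric.diam (u k i) := by
              rw [ENNReal.ofReal_mul (by norm_num : (0:ℝ) ≤ 2), hdd,
                ENNReal.ofReal_toReal (hutop k i)]
              norm_num
            rw [h2d, mul_pow, ← ENNReal.rpow_natCast (EMetric.diam (u k i)) m]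
            ring
        _ = EMetric.diam (u k i) ^ s * ((2:ℝ≥0∞)^m * ENNReal.ofReal (2*R) ^ (2*n - m)) := by
            rw [← ENNReal.rpow_add_of_nonneg _ _ hsm (Nat.cast_nonneg m), sub_add_cancel]
    calc ∑' i, ∫⁻ x in closedBall (0:E n) R,
        (D k i).indicator (fun _ => EMetric.diam (u k i) ^ (s - (m:ℝ))) (x, P) ∂volume
        ≤ ∑' i, EMetric.diam (u k i) ^ s * ((2:ℝ≥0∞)^m * ENNReal.ofReal (2*R) ^ (2*n - m)) :=
          ENNReal.tsum_le_tsum hterm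
      _ = (∑' i, EMetric.diam (u k i) ^ s) * ((2:ℝ≥0∞)^m * ENNReal.ofReal (2*R) ^ (2*n - m)) :=
          ENNReal.tsum_mul_right
      _ ≤ (μH[s] A + 1) * ((2:ℝ≥0∞)^m * ENNReal.ofReal (2*R) ^ (2*n - m)) := by
          gcongr; exact husum k
      _ = (2:ℝ≥0∞)^m * ENNReal.ofReal (2*R) ^ (2*n - m) * (μH[s] A + 1) := by ring
  -- assembly per ball
  have hKmeas : MeasurableSet (Kset n m) := (isClosed_Kset n m).measurableSet
  have main : ∀ R : ℕ, ∀ᵐ x ∂(volume.restrict (closedBall (0:E n) (R:ℝ))),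
      ∀ᵐ P ∂ν, P ∈ grass n m →
        μH[s - m] (A ∩ {y : E n | y - x ∈ (LinearMap.range (P : E n →ₗ[ℝ] E n))ᗮ}) < ∞ := by
    intro R
    set μB := volume.restrict (closedBall (0:E n) (R:ℝ)) with hμB
    set νK := ν.restrict (Kset n m) with hνK
    set C2 : ℝ≥0∞ := (2:ℝ≥0∞)^m * ENNReal.ofReal (2*(R:ℝ)) ^ (2*n - m) * (μH[s] A + 1)
      with hC2
    have hC2top : C2 ≠ ∞ := by
      rw [hC2]
      exact ENNReal.mul_ne_top (ENNReal.mul_ne_top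
        (ENNReal.pow_ne_top ENNReal.ofNat_ne_top)
        (ENNReal.pow_ne_top ENNReal.ofReal_ne_top)) hC0
    have hswap : ∫⁻ x, ∫⁻ P, G (x, P) ∂νK ∂μB = ∫⁻ P, ∫⁻ x, G (x, P) ∂μB ∂νK :=
      lintegral_lintegral_swap hGmeas.aemeasurable
    have hinner : ∀ P ∈ Kset n m, ∫⁻ x, G (x, P) ∂μB ≤ C2 := by
      intro P hPK
      have hle1 : ∫⁻ x, G (x, P) ∂μB ≤
          Filter.liminf (fun k => ∫⁻ x, g k (x, P) ∂μB) Filter.atTop := by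
        simp only [hGdef]
        exact lintegral_liminf_le fun k =>
          (hgmeas k).comp (measurable_id.prodMk measurable_const)
      refine hle1.trans ?_
      have hband : ∀ k, ∫⁻ x, g k (x, P) ∂μB ≤ C2 := fun k =>
        claim2 (R:ℝ) (Nat.cast_nonneg R) k P hPK
      rw [Filter.liminf_eq_iSup_iInf_of_nat]
      exact iSup_le fun k => le_trans (iInf₂_le k le_rfl) (hband k)
    have houter : ∫⁻ P, ∫⁻ x, G (x, P) ∂μB ∂νK ≤ C2 := by
      have hae : ∀ᵐ P ∂νK, ∫⁻ x, G (x, P) ∂μB ≤ C2 := by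
        filter_upwards [ae_restrict_mem hKmeas] with P hP using hinner P hP
      calc ∫⁻ P, ∫⁻ x, G (x, P) ∂μB ∂νK ≤ ∫⁻ _, C2 ∂νK := lintegral_mono_ae hae
        _ = C2 * νK univ := lintegral_const C2
        _ ≤ C2 * 1 := by
            gcongr
            rw [hνK, Measure.restrict_apply_univ]
            exact prob_le_one
        _ = C2 := mul_one _
    have hfinx : ∫⁻ x, ∫⁻ P, G (x, P) ∂νK ∂μB ≠ ∞ := by
      rw [hswap]; exact (houter.trans_lt hC2top.lt_top).ne
    have hmx : Measurable fun x => ∫⁻ P, G (x, P) ∂νK :=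
      hGmeas.lintegral_prod_right'
    filter_upwards [ae_lt_top hmx hfinx] with x hxlt
    have haeP : ∀ᵐ P ∂νK, G (x, P) < ∞ :=
      ae_lt_top (hGmeas.comp (measurable_const.prodMk measurable_id)) hxlt.ne
    rw [hνK, ae_restrict_iff' hKmeas] at haeP
    filter_upwards [haeP] with P hPim hPg
    exact lt_of_le_of_lt (claim1 x P hPg) (hPim (grass_subset_Kset n m hPg))
  -- glue over R
  rw [ae_iff]
  set N := {x : E n | ¬ ∀ᵐ P ∂ν, P ∈ grass n m →
    μH[s - m] (A ∩ {y : E n | y - x ∈ (LinearMap.range (P : E n →ₗ[ℝ] E n))ᗮ}) < ∞} with hN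
  have hNsub : N ⊆ ⋃ R : ℕ, (N ∩ closedBall (0:E n) (R:ℝ)) := fun x hx =>
    mem_iUnion.mpr ⟨⌈‖x‖⌉₊, hx, mem_closedBall_zero_iff.mpr (Nat.le_ceil _)⟩
  have hz : ∀ R : ℕ, volume (N ∩ closedBall (0:E n) (R:ℝ)) = 0 := fun R => by
    have h := main R
    rw [ae_iff] at h
    rw [Measure.restrict_apply' measurableSet_closedBall] at h
    exact h
  refine le_antisymm ?_ zero_le
  refine le_trans (measure_mono hNsub) (le_trans (measure_iUnion_le _) ?_)
  simp [hz]
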